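/- Let z : ZMod (2t) → ℤ satisfy |z(k+1) - z(k)| = 1 and z(k+t) = t - z(k) for all k. Then the number of local minima of z equals 3t/4 + (1/(8t))·∑_{k=0}^{2t-1} |ẑ(k)|²·(2cos²(πk/t) - cos(πk/t) - 1). -/

import Mathlib

/-- Number of local minima of a `2t`-periodic integer sequence. -/
def minimaCount (t : ℕ) (z : ZMod (2*t) → ℤ) : ℕ :=
  ((Finset.range (2*t)).filter (fun k : ℕ =>
    z ((k : ZMod (2*t)) - 1) > z (k : ZMod (2*t)) ∧
    z ((k : ZMod (2*t)) + 1) > z (k : ZMod (2*t)))).card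

/-- Discrete Fourier transform of a `2t`-periodic sequence,
using the primitive `2t`-th root of unity `exp(-πi/t)`. -/
noncomputable def dft (t : ℕ) (z : ZMod (2*t) → ℂ) (k : ℕ) : ℂ :=
  ∑ j ∈ Finset.range (2*t),
    z (j : ZMod (2*t)) * Complex.exp (-(Real.pi : ℂ) * Complex.I * k * j / t)

open Finset Complex


lemma sum_range_zmod {M : Type*} [AddCommMonoid M] (n : ℕ) [NeZero n] (f : ZMod n → M) :
    ∑ j ∈ Finset.range n, f (j : ZMod n) = ∑ j : ZMod n, f j := by
  refine Finset.sum_nbij' (fun j => (j : ZMod n)) (fun a => a.val) ?_ ?_ ?_ ?_ ?_ <;>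
    simp only [Finset.mem_range, Finset.mem_univ, implies_true, ZMod.natCast_val,
      ZMod.val_natCast, ZMod.cast_id] <;>
    intros <;> first | omega | exact ZMod.val_lt _ | exact Nat.mod_eq_of_lt ‹_›

lemma shift_sum {M : Type*} [AddCommMonoid M] {n : ℕ} [NeZero n] (g : ZMod n → M) (c : ZMod n) :
    ∑ k : ZMod n, g (k + c) = ∑ k : ZMod n, g k :=
  Equiv.sum_comp (Equiv.addRight c) g

lemma stepA (t : ℕ) [NeZero (2*t)] (z : ZMod (2*t) → ℤ)
    (hstep : ∀ k : ZMod (2*t), |z (k + 1) - z k| = 1) :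
    4 * (minimaCount t z : ℤ) =
      3*t + (∑ j : ZMod (2*t), z j * z (j + 2)) - (∑ j : ZMod (2*t), z j * z (j + 1)) := by
  have hcard : (Finset.univ : Finset (ZMod (2*t))).card = 2*t := by
    simp [Finset.card_univ, ZMod.card]
  have eT1 : ∑ k : ZMod (2*t), z (k + 1) = ∑ k : ZMod (2*t), z k := shift_sum z 1
  have eT2 : ∑ k : ZMod (2*t), z (k + 2) = ∑ k : ZMod (2*t), z k := shift_sum z 2
  have eS1' : ∑ k : ZMod (2*t), z (k + 1) * z (k + 2) = ∑ j : ZMod (2*t), z j * z (j + 1) := by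
    have := shift_sum (n := 2*t) (fun k => z k * z (k + 1)) 1
    simpa [add_assoc, one_add_one_eq_two] using this
  have eS0' : ∑ k : ZMod (2*t), z (k + 1) * z (k + 1) = ∑ j : ZMod (2*t), z j * z j :=
    shift_sum (fun k => z k * z k) 1
  have hsq : ∀ k : ZMod (2*t), (z (k + 1) - z k)^2 = 1 := by
    intro k; rw [← _root_.sq_abs, hstep k]; norm_num
  have hS0S1 : ∑ j : ZMod (2*t), z j * z j = (∑ j : ZMod (2*t), z j * z (j + 1)) + t := by
    have h1 : ((2*t : ℕ) : ℤ) = ∑ k : ZMod (2*t), (z (k + 1) - z k)^2 := by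
      simp [hsq, hcard]
    have h2 : ∑ k : ZMod (2*t), (z (k + 1) - z k)^2
        = (∑ k : ZMod (2*t), z (k+1) * z (k+1) + ∑ k : ZMod (2*t), z k * z k)
          - ∑ k : ZMod (2*t), 2 * (z k * z (k+1)) := by
      rw [← Finset.sum_add_distrib, ← Finset.sum_sub_distrib]
      exact Finset.sum_congr rfl (fun k _ => by ring)
    rw [h2, eS0', ← Finset.mul_sum] at h1
    push_cast at h1 ⊢
    omega
  have hcount : (minimaCount t z : ℤ)
      = ∑ k : ZMod (2*t), (if z (k - 1) > z k ∧ z (k + 1) > z k then (1:ℤ) else 0) := by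
    rw [minimaCount, Finset.card_filter]
    push_cast
    exact sum_range_zmod (2*t) (fun k => if z (k - 1) > z k ∧ z (k + 1) > z k then (1:ℤ) else 0)
  have hshifted : (minimaCount t z : ℤ)
      = ∑ k : ZMod (2*t), (if z k > z (k+1) ∧ z (k + 2) > z (k+1) then (1:ℤ) else 0) := by
    rw [hcount]
    rw [← shift_sum (n := 2*t) (fun k => if z (k - 1) > z k ∧ z (k + 1) > z k then (1:ℤ) else 0) 1]
    exact Finset.sum_congr rfl (fun k _ => by
      have h1 : k + 1 - 1 = k := by ring
      have h2 : k + 1 + 1 = k + 2 := by ring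
      rw [h1, h2])
  have hpoint : ∀ k : ZMod (2*t),
      4 * (if z k > z (k+1) ∧ z (k + 2) > z (k+1) then (1:ℤ) else 0)
      = (1 - (z (k+1) - z k)) * (1 + (z (k+2) - z (k+1))) := by
    intro k
    have h1 := (abs_eq (by norm_num : (0:ℤ) ≤ 1)).mp (hstep k)
    have h2 := (abs_eq (by norm_num : (0:ℤ) ≤ 1)).mp (hstep (k+1))
    rw [show k + 1 + 1 = k + 2 by ring] at h2
    split_ifs with h
    · have e1 : z (k+1) - z k = -1 := by rcases h1 with e | e <;> omega
      have e2 : z (k+2) - z (k+1) = 1 := by rcases h2 with e | e <;> omega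
      rw [e1, e2]; norm_num
    · rcases h1 with e1 | e1 <;> rcases h2 with e2 | e2 <;>
        first
          | exact absurd ⟨by omega, by omega⟩ h
          | (rw [e1, e2]; ring)
  have hmain : 4 * (minimaCount t z : ℤ) = 2*t + (∑ j : ZMod (2*t), z j * z j)
      - 2*(∑ j : ZMod (2*t), z j * z (j + 1)) + ∑ j : ZMod (2*t), z j * z (j + 2) := by
    rw [hshifted, Finset.mul_sum]
    calc ∑ k : ZMod (2*t), 4 * (if z k > z (k+1) ∧ z (k + 2) > z (k+1) then (1:ℤ) else 0)
        = ∑ k : ZMod (2*t), ((1:ℤ) + ((z (k+2) - 2 * z (k+1)) + z k)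
            - ((z (k+1) * z (k+2) + z k * z (k+1)) - (z k * z (k+2) + z (k+1) * z (k+1)))) :=
          Finset.sum_congr rfl (fun k _ => by rw [hpoint k]; ring)
      _ = _ := by
          simp only [Finset.sum_add_distrib, Finset.sum_sub_distrib, ← Finset.mul_sum,
            Finset.sum_const, hcard, nsmul_eq_mul, mul_one]
          rw [eT1, eT2, eS1', eS0']
          push_cast
          ring
  rw [hmain, hS0S1]
  push_cast
  ring

noncomputable def ee (t : ℕ) (r : ℤ) : ℂ :=
  Complex.exp ((Real.pi : ℂ) * Complex.I * r / t)

lemma ee_add (t : ℕ) (r s : ℤ) : ee t (r + s) = ee t r * ee t s := by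
  rw [ee, ee, ee, ← Complex.exp_add]
  congr 1
  push_cast
  ring

lemma ee_pow (t : ℕ) (r : ℤ) (k : ℕ) : ee t r ^ k = ee t (r * k) := by
  rw [ee, ee, ← Complex.exp_nat_mul]
  congr 1
  push_cast
  ring

lemma ee_conj (t : ℕ) (r : ℤ) : (starRingEnd ℂ) (ee t r) = ee t (-r) := by
  rw [ee, ee, ← Complex.exp_conj]
  congr 1
  simp [map_div₀, Complex.conj_I]

lemma ee_one (t : ℕ) (ht : t ≠ 0) (s : ℤ) : ee t (2 * t * s) = 1 := by
  have htc : (t : ℂ) ≠ 0 := Nat.cast_ne_zero.mpr ht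
  rw [ee, show (Real.pi : ℂ) * Complex.I * (2 * t * s : ℤ) / t = s * (2 * Real.pi * Complex.I) by
    rw [div_eq_iff htc]; push_cast; ring]
  exact Complex.exp_int_mul_two_pi_mul_I s

lemma L1 (t : ℕ) (ht : t ≠ 0) (r : ℤ) :
    ∑ k ∈ Finset.range (2*t), ee t (r * k) =
      if (r : ZMod (2*t)) = 0 then ((2*t : ℕ) : ℂ) else 0 := by
  haveI : NeZero (2*t) := ⟨by omega⟩
  have hpow : ∀ k : ℕ, ee t (r * k) = ee t r ^ k := fun k => (ee_pow t r k).symm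
  split_ifs with hcond
  · obtain ⟨s, rfl⟩ : ((2*t : ℕ) : ℤ) ∣ r := (ZMod.intCast_zmod_eq_zero_iff_dvd r (2*t)).mp hcond
    have : ∀ k ∈ Finset.range (2*t), ee t ((((2*t : ℕ) : ℤ) * s) * k) = 1 := by
      intro k _
      have := ee_one t ht (s * k)
      rw [← this]
      congr 1
      push_cast
      ring
    rw [Finset.sum_congr rfl this]
    simp
  · have hx1 : ee t r ≠ 1 := by
      intro hone
      apply hcond
      rw [ee, Complex.exp_eq_one_iff] at hone
      obtain ⟨m, hm⟩ := hone
      have hπ : (Real.pi : ℂ) ≠ 0 := Complex.ofReal_ne_zero.mpr Real.pi_ne_zero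
      have hI : Complex.I ≠ 0 := Complex.I_ne_zero
      have htc : (t : ℂ) ≠ 0 := Nat.cast_ne_zero.mpr ht
      have hr : (r : ℂ) = 2 * m * t := by
        have h2 : (Real.pi : ℂ) * Complex.I * r = (Real.pi : ℂ) * Complex.I * (2 * m * t) := by
          field_simp at hm
          linear_combination (↑Real.pi * Complex.I) * hm
        exact mul_left_cancel₀ (mul_ne_zero hπ hI) h2
      have hr' : r = 2 * m * t := by exact_mod_cast hr
      rw [ZMod.intCast_zmod_eq_zero_iff_dvd]
      exact ⟨m, by push_cast; linarith⟩
    have hxn : ee t r ^ (2*t) = 1 := by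
      rw [ee_pow]
      have := ee_one t ht r
      rw [← this]
      congr 1
      push_cast
      ring
    simp_rw [hpow]
    rw [geom_sum_eq hx1, hxn]
    simp

lemma sum_range_zmod' {M : Type*} [AddCommMonoid M] (n : ℕ) [NeZero n] (f : ZMod n → M) :
    ∑ j ∈ Finset.range n, f (j : ZMod n) = ∑ j : ZMod n, f j := by
  refine Finset.sum_nbij' (fun j => (j : ZMod n)) (fun a => a.val) ?_ ?_ ?_ ?_ ?_ <;>
    simp only [Finset.mem_range, Finset.mem_univ, implies_true, ZMod.natCast_val,
      ZMod.val_natCast, ZMod.cast_id] <;>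
    intros <;> first | omega | exact ZMod.val_lt _ | exact Nat.mod_eq_of_lt ‹_›

lemma dft_eq (t : ℕ) (f : ZMod (2*t) → ℂ) (k : ℕ) :
    dft t f k = ∑ j ∈ Finset.range (2*t), f (j : ZMod (2*t)) * ee t (-(k*j)) := by
  refine Finset.sum_congr rfl fun j _ => ?_
  rw [ee]
  congr 1
  push_cast
  ring

lemma conj_dft (t : ℕ) (f : ZMod (2*t) → ℂ) (k : ℕ) :
    (starRingEnd ℂ) (dft t f k)
      = ∑ l ∈ Finset.range (2*t), (starRingEnd ℂ) (f (l : ZMod (2*t))) * ee t (k*l) := by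
  rw [dft_eq, map_sum]
  refine Finset.sum_congr rfl fun l _ => ?_
  rw [map_mul, ee_conj, neg_neg]

lemma L2 (t : ℕ) [NeZero (2*t)] (ht : t ≠ 0) (f : ZMod (2*t) → ℂ) (m : ℕ) :
    ∑ k ∈ Finset.range (2*t), dft t f k * (starRingEnd ℂ) (dft t f k) * ee t (m*k)
      = ((2*t : ℕ) : ℂ) * ∑ l : ZMod (2*t), f (l + m) * (starRingEnd ℂ) (f l) := by
  have hk : ∀ k : ℕ, dft t f k * (starRingEnd ℂ) (dft t f k) * ee t (m*k)
      = ∑ l ∈ Finset.range (2*t), ∑ j ∈ Finset.range (2*t),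
          (f (j : ZMod (2*t)) * (starRingEnd ℂ) (f (l : ZMod (2*t))))
            * ee t (((l : ℤ) + m - j) * k) := by
    intro k
    rw [conj_dft, dft_eq, Finset.sum_mul_sum, Finset.sum_comm, Finset.sum_mul]
    refine Finset.sum_congr rfl fun l _ => ?_
    rw [Finset.sum_mul]
    refine Finset.sum_congr rfl fun j _ => ?_
    calc (f (j : ZMod (2*t)) * ee t (-(k*j)))
          * ((starRingEnd ℂ) (f (l : ZMod (2*t))) * ee t (k*l)) * ee t (m*k)
        = (f (j : ZMod (2*t)) * (starRingEnd ℂ) (f (l : ZMod (2*t))))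
            * (ee t (-(k*j)) * ee t (k*l) * ee t (m*k)) := by ring
      _ = _ := by
          rw [← ee_add, ← ee_add]
          congr 1
          push_cast
          ring
  calc ∑ k ∈ Finset.range (2*t), dft t f k * (starRingEnd ℂ) (dft t f k) * ee t (m*k)
      = ∑ l ∈ Finset.range (2*t), ∑ j ∈ Finset.range (2*t),
          (f (j : ZMod (2*t)) * (starRingEnd ℂ) (f (l : ZMod (2*t))))
            * ∑ k ∈ Finset.range (2*t), ee t ((((l : ℤ) + m - j)) * k) := by
        rw [Finset.sum_congr rfl (fun k _ => hk k), Finset.sum_comm]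
        refine Finset.sum_congr rfl fun l _ => ?_
        rw [Finset.sum_comm]
        refine Finset.sum_congr rfl fun j _ => ?_
        rw [← Finset.mul_sum]
    _ = ∑ l ∈ Finset.range (2*t),
          f ((l : ZMod (2*t)) + m) * (starRingEnd ℂ) (f (l : ZMod (2*t))) * ((2*t : ℕ) : ℂ) := by
        refine Finset.sum_congr rfl fun l _ => ?_
        have hinner : ∀ j ∈ Finset.range (2*t),
            (f (j : ZMod (2*t)) * (starRingEnd ℂ) (f (l : ZMod (2*t))))
              * ∑ k ∈ Finset.range (2*t), ee t ((((l : ℤ) + m - j)) * k)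
            = (fun a : ZMod (2*t) => if a = (l : ZMod (2*t)) + m
                then f a * (starRingEnd ℂ) (f (l : ZMod (2*t))) * ((2*t : ℕ) : ℂ)
                else 0) (j : ZMod (2*t)) := by
          intro j _
          rw [L1 t ht]
          have hiff : (((l : ℤ) + m - j : ℤ) : ZMod (2*t)) = 0
              ↔ (j : ZMod (2*t)) = (l : ZMod (2*t)) + m := by
            push_cast
            rw [sub_eq_zero, eq_comm]
          simp only [mul_ite, mul_zero]
          rw [if_congr hiff rfl rfl]
        rw [Finset.sum_congr rfl hinner,
          sum_range_zmod' (2*t) (fun a : ZMod (2*t) => if a = (l : ZMod (2*t)) + m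
            then f a * (starRingEnd ℂ) (f (l : ZMod (2*t))) * ((2*t : ℕ) : ℂ) else 0),
          Finset.sum_ite_eq' Finset.univ ((l : ZMod (2*t)) + m)]
        simp only [Finset.mem_univ, if_true]
    _ = _ := by
        rw [sum_range_zmod' (2*t)
          (fun l => f (l + m) * (starRingEnd ℂ) (f l) * ((2*t : ℕ) : ℂ))]
        rw [← Finset.sum_mul]
        ring

lemma stepB_re (t : ℕ) [NeZero (2*t)] (ht : t ≠ 0) (z : ZMod (2*t) → ℤ) (m : ℕ) :
    ∑ k ∈ Finset.range (2*t),
        Complex.normSq (dft t (fun j => (z j : ℂ)) k) * Real.cos (Real.pi * (m*k) / t)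
      = 2*t * ∑ l : ZMod (2*t), ((z (l + m) : ℝ) * (z l : ℝ)) := by
  set f : ZMod (2*t) → ℂ := fun j => (z j : ℂ) with hf
  have hconj : ∀ a, (starRingEnd ℂ) (f a) = f a := fun a => by simp [hf]
  have hterm : ∀ k : ℕ, (dft t f k * (starRingEnd ℂ) (dft t f k) * ee t (m*k)).re
      = Complex.normSq (dft t f k) * Real.cos (Real.pi * (m*k) / t) := by
    intro k
    rw [Complex.mul_conj]
    rw [show ee t ((m : ℤ)*k) = Complex.exp (((Real.pi * (m*k) / t : ℝ) : ℂ) * Complex.I) by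
      rw [ee]; congr 1; push_cast; ring]
    rw [Complex.re_ofReal_mul, Complex.exp_ofReal_mul_I_re]
  calc ∑ k ∈ Finset.range (2*t),
        Complex.normSq (dft t f k) * Real.cos (Real.pi * (m*k) / t)
      = (∑ k ∈ Finset.range (2*t), dft t f k * (starRingEnd ℂ) (dft t f k) * ee t (m*k)).re := by
        rw [Complex.re_sum]
        exact Finset.sum_congr rfl fun k _ => (hterm k).symm
    _ = (((2*t : ℕ) : ℂ) * ∑ l : ZMod (2*t), f (l + m) * (starRingEnd ℂ) (f l)).re := by
        rw [L2 t ht f m]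
    _ = 2*t * ∑ l : ZMod (2*t), ((z (l + m) : ℝ) * (z l : ℝ)) := by
        simp only [hconj]
        rw [show (∑ l : ZMod (2*t), f (l + m) * f l)
            = ((∑ l : ZMod (2*t), ((z (l + m) : ℝ) * (z l : ℝ)) : ℝ) : ℂ) by
          push_cast; rfl]
        rw [show ((2*t : ℕ) : ℂ) = (((2*t : ℕ) : ℝ) : ℂ) by push_cast; ring]
        rw [← Complex.ofReal_mul, Complex.ofReal_re]
        push_cast
        ring


theorem minima_eq_three_quarter_t_formula (t : ℕ) (ht : 2 ≤ t) (z : ZMod (2*t) → ℤ)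
    (hstep : ∀ k : ZMod (2*t), |z (k + 1) - z k| = 1)
    (hant : ∀ k : ZMod (2*t), z (k + (t : ZMod (2*t))) = (t : ℤ) - z k) :
    (minimaCount t z : ℝ) =
      3*(t : ℝ)/4 + (1/(8*(t:ℝ))) * ∑ k ∈ Finset.range (2*t),
        ‖dft t (fun j => (z j : ℂ)) k‖^2 *
          (2*(Real.cos (Real.pi * k / t))^2 - Real.cos (Real.pi * k / t) - 1) := by
  haveI : NeZero (2*t) := ⟨by omega⟩
  have ht0 : t ≠ 0 := by omega
  have htR : (t : ℝ) ≠ 0 := Nat.cast_ne_zero.mpr ht0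
  -- Fourier side, m = 1 and m = 2
  have h1 : ∑ k ∈ Finset.range (2*t),
      Complex.normSq (dft t (fun j => (z j : ℂ)) k) * Real.cos (Real.pi * k / t)
      = 2*t * ∑ l : ZMod (2*t), ((z (l + 1) : ℝ) * (z l : ℝ)) := by
    have h := stepB_re t ht0 z 1
    simp only [Nat.cast_one] at h
    rw [← h]
    refine Finset.sum_congr rfl fun k _ => ?_
    congr 2
    push_cast
    ring
  have h2 : ∑ k ∈ Finset.range (2*t),
      Complex.normSq (dft t (fun j => (z j : ℂ)) k) * Real.cos (Real.pi * (2 * k) / t)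
      = 2*t * ∑ l : ZMod (2*t), ((z (l + 2) : ℝ) * (z l : ℝ)) := by
    have h := stepB_re t ht0 z 2
    simp only [Nat.cast_ofNat] at h
    rw [← h]
    try
      refine Finset.sum_congr rfl fun k _ => ?_
      congr 2
      push_cast
      ring
  -- rewrite the summand
  have hsum : ∑ k ∈ Finset.range (2*t),
      ‖dft t (fun j => (z j : ℂ)) k‖^2 *
        (2*(Real.cos (Real.pi * k / t))^2 - Real.cos (Real.pi * k / t) - 1)
      = (∑ k ∈ Finset.range (2*t),
          Complex.normSq (dft t (fun j => (z j : ℂ)) k) * Real.cos (Real.pi * (2 * k) / t))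
        - ∑ k ∈ Finset.range (2*t),
          Complex.normSq (dft t (fun j => (z j : ℂ)) k) * Real.cos (Real.pi * k / t) := by
    rw [← Finset.sum_sub_distrib]
    refine Finset.sum_congr rfl fun k _ => ?_
    rw [Complex.sq_norm, show Real.pi * (2 * (k:ℝ)) / t = 2*(Real.pi * k / t) by ring,
      Real.cos_two_mul]
    ring
  -- relate the ZMod sums to the integer correlation sums
  have e1 : (∑ l : ZMod (2*t), ((z (l + 1) : ℝ) * (z l : ℝ)))
      = ((∑ j : ZMod (2*t), z j * z (j + 1) : ℤ) : ℝ) := by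
    push_cast
    exact Finset.sum_congr rfl fun l _ => mul_comm _ _
  have e2 : (∑ l : ZMod (2*t), ((z (l + 2) : ℝ) * (z l : ℝ)))
      = ((∑ j : ZMod (2*t), z j * z (j + 2) : ℤ) : ℝ) := by
    push_cast
    exact Finset.sum_congr rfl fun l _ => mul_comm _ _
  have hA := stepA t z hstep
  have hA' : 4 * (minimaCount t z : ℝ)
      = 3*t + ((∑ j : ZMod (2*t), z j * z (j + 2) : ℤ) : ℝ)
        - ((∑ j : ZMod (2*t), z j * z (j + 1) : ℤ) : ℝ) := by
    exact_mod_cast hA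
  rw [hsum, h1, h2, e1, e2]
  set S1 : ℝ := ((∑ j : ZMod (2*t), z j * z (j + 1) : ℤ) : ℝ)
  set S2 : ℝ := ((∑ j : ZMod (2*t), z j * z (j + 2) : ℤ) : ℝ)
  have hkey : (1/(8*(t:ℝ))) * (2*t*S2 - 2*t*S1) = (S2 - S1)/4 := by
    field_simp
    ring
  rw [hkey]
  linarith [hA']
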